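/- Let σ ≥ 0, β ∈ ℝ, and let s* be a global minimizer of M(s) = f0 + gᵀs + (1/2)sᵀHs + (β/6)‖s‖³ + (σ/4)‖s‖⁴ with β + 3σ‖s*‖ ≥ 0. Then for every s ∈ ℝⁿ, M(s) - M(s*) = (1/2)(s - s*)ᵀ B(s*) (s - s*) + F₂(s), where B(s*) = H + (β/2)‖s*‖I + σ‖s*‖²I ⪰ 0 and F₂(s) = (1/2)(‖s‖-‖s*‖)²[((β+3σ‖s*‖)/6)(‖s*‖+2‖s‖) + (σ/2)‖s‖²] ≥ 0. -/

import Mathlib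

set_option maxHeartbeats 1000000


open Matrix Polynomial

noncomputable def enorm' {n : ℕ} (s : Fin n → ℝ) : ℝ := Real.sqrt (s ⬝ᵥ s)

noncomputable def Mfun {n : ℕ} (f0 : ℝ) (g : Fin n → ℝ)
    (H : Matrix (Fin n) (Fin n) ℝ) (β σ : ℝ) (s : Fin n → ℝ) : ℝ :=
  f0 + g ⬝ᵥ s + (1/2) * (s ⬝ᵥ (H *ᵥ s)) + (β/6) * enorm' s ^ 3 + (σ/4) * enorm' s ^ 4

noncomputable def Bmat {n : ℕ} (H : Matrix (Fin n) (Fin n) ℝ) (β σ : ℝ)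
    (s : Fin n → ℝ) : Matrix (Fin n) (Fin n) ℝ :=
  H + ((β/2) * enorm' s) • (1 : Matrix (Fin n) (Fin n) ℝ)
    + (σ * enorm' s ^ 2) • (1 : Matrix (Fin n) (Fin n) ℝ)

lemma dot_self_nonneg {n : ℕ} (s : Fin n → ℝ) : 0 ≤ s ⬝ᵥ s :=
  Finset.sum_nonneg fun _ _ => mul_self_nonneg _

lemma enorm_nonneg' {n : ℕ} (s : Fin n → ℝ) : 0 ≤ enorm' s := Real.sqrt_nonneg _

lemma enorm_sq {n : ℕ} (s : Fin n → ℝ) : enorm' s ^ 2 = s ⬝ᵥ s :=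
  Real.sq_sqrt (dot_self_nonneg s)

lemma enorm_eq_norm {n : ℕ} (s : Fin n → ℝ) :
    enorm' s = ‖(WithLp.equiv 2 (Fin n → ℝ)).symm s‖ := by
  rw [EuclideanSpace.norm_eq]
  unfold enorm' dotProduct
  congr 1
  refine Finset.sum_congr rfl fun i _ => ?_
  show s i * s i = ‖s i‖ ^ 2
  rw [Real.norm_eq_abs, sq_abs, sq]

lemma enormp_add_le {n : ℕ} (a b : Fin n → ℝ) : enorm' (a + b) ≤ enorm' a + enorm' b := by
  rw [enorm_eq_norm, enorm_eq_norm, enorm_eq_norm]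
  exact norm_add_le _ _

lemma enorm_smul' {n : ℕ} (t : ℝ) (a : Fin n → ℝ) : enorm' (t • a) = |t| * enorm' a := by
  rw [enorm_eq_norm, enorm_eq_norm]
  rw [show (WithLp.equiv 2 (Fin n → ℝ)).symm (t • a)
        = t • (WithLp.equiv 2 (Fin n → ℝ)).symm a from rfl]
  rw [norm_smul, Real.norm_eq_abs]

lemma aux_limit (a b : ℝ) (h : ∀ t : ℝ, 0 < t → t ≤ 1 → 0 ≤ a + t * b) : 0 ≤ a := by
  by_contra hc
  push_neg at hc
  have hb1 : 0 < |b| + 1 := by positivity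
  set t := min 1 (-a / (2 * (|b| + 1))) with ht
  have ht0 : 0 < t := lt_min one_pos (div_pos (by linarith) (by positivity))
  have ht1 : t ≤ 1 := min_le_left _ _
  have ht2 : t ≤ -a / (2 * (|b| + 1)) := min_le_right _ _
  have h3 : t * (2 * (|b| + 1)) ≤ -a := by
    rw [← le_div_iff₀ (by positivity)]; exact ht2
  have h4 := h t ht0 ht1
  nlinarith [le_abs_self b, ht0.le, mul_le_mul_of_nonneg_left (le_abs_self b) ht0.le]

lemma keyA {n : ℕ} (f0 : ℝ) (g : Fin n → ℝ) (H : Matrix (Fin n) (Fin n) ℝ)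
    (hH : H.IsSymm) (β σ : ℝ) (sstar s : Fin n → ℝ) :
    Mfun f0 g H β σ s - Mfun f0 g H β σ sstar =
      (g + Bmat H β σ sstar *ᵥ sstar) ⬝ᵥ (s - sstar)
      + (1/2) * ((s - sstar) ⬝ᵥ (Bmat H β σ sstar *ᵥ (s - sstar)))
      + (1/2) * (enorm' s - enorm' sstar)^2 *
          (((β + 3 * σ * enorm' sstar)/6) * (enorm' sstar + 2 * enorm' s)
            + (σ/2) * enorm' s ^ 2) := by
  have hsym : sstar ⬝ᵥ (H *ᵥ s) = s ⬝ᵥ (H *ᵥ sstar) := by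
    rw [dotProduct_mulVec, ← mulVec_transpose, hH.eq, dotProduct_comm]
  have h1 : s ⬝ᵥ s = enorm' s ^ 2 := (enorm_sq s).symm
  have h2 : sstar ⬝ᵥ sstar = enorm' sstar ^ 2 := (enorm_sq sstar).symm
  have h3 : sstar ⬝ᵥ s = s ⬝ᵥ sstar := dotProduct_comm _ _
  have h4 : (H *ᵥ sstar) ⬝ᵥ s = s ⬝ᵥ (H *ᵥ sstar) := dotProduct_comm _ _
  have h5 : (H *ᵥ sstar) ⬝ᵥ sstar = sstar ⬝ᵥ (H *ᵥ sstar) := dotProduct_comm _ _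
  simp only [Mfun, Bmat, Matrix.add_mulVec, Matrix.smul_mulVec, Matrix.one_mulVec,
    Matrix.mulVec_sub, dotProduct_add, add_dotProduct, dotProduct_sub, sub_dotProduct,
    dotProduct_smul, smul_dotProduct, smul_eq_mul, hsym, h1, h2, h3, h4, h5]
  ring

theorem stmt5 {n : ℕ} (f0 : ℝ) (g : Fin n → ℝ) (H : Matrix (Fin n) (Fin n) ℝ)
    (hH : H.IsSymm) (β σ : ℝ) (hσ : 0 ≤ σ) (sstar : Fin n → ℝ)
    (hmin : ∀ s : Fin n → ℝ, Mfun f0 g H β σ sstar ≤ Mfun f0 g H β σ s)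
    (hβ : 0 ≤ β + 3 * σ * enorm' sstar) :
    (Bmat H β σ sstar).PosSemidef ∧
    ∀ s : Fin n → ℝ,
      Mfun f0 g H β σ s - Mfun f0 g H β σ sstar =
        (1/2) * ((s - sstar) ⬝ᵥ ((Bmat H β σ sstar) *ᵥ (s - sstar)))
          + (1/2) * (enorm' s - enorm' sstar)^2 *
              (((β + 3 * σ * enorm' sstar)/6) * (enorm' sstar + 2 * enorm' s)
                + (σ/2) * enorm' s ^ 2)
      ∧ 0 ≤ (1/2) * (enorm' s - enorm' sstar)^2 *
              (((β + 3 * σ * enorm' sstar)/6) * (enorm' sstar + 2 * enorm' s)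
                + (σ/2) * enorm' s ^ 2) := by
  have hrs0 : 0 ≤ enorm' sstar := enorm_nonneg' sstar
  -- nonnegativity of the F₂ term
  have hF : ∀ s : Fin n → ℝ, 0 ≤ (1/2) * (enorm' s - enorm' sstar)^2 *
      (((β + 3 * σ * enorm' sstar)/6) * (enorm' sstar + 2 * enorm' s)
        + (σ/2) * enorm' s ^ 2) := by
    intro s
    have h1 := enorm_nonneg' s
    have hbr : 0 ≤ ((β + 3 * σ * enorm' sstar)/6) * (enorm' sstar + 2 * enorm' s)
        + (σ/2) * enorm' s ^ 2 :=
      add_nonneg (mul_nonneg (by linarith) (by linarith)) (by positivity)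
    have : 0 ≤ (1/2) * (enorm' s - enorm' sstar)^2 := by positivity
    exact mul_nonneg this hbr
  -- first order condition
  have hwd : ∀ d : Fin n → ℝ,
      0 ≤ (g + Bmat H β σ sstar *ᵥ sstar) ⬝ᵥ d := by
    intro d
    have hrd : 0 ≤ enorm' d := enorm_nonneg' d
    set rs := enorm' sstar with hrsdef
    set rd := enorm' d with hrddef
    set aa := (g + Bmat H β σ sstar *ᵥ sstar) ⬝ᵥ d with haa
    set QQ := d ⬝ᵥ (Bmat H β σ sstar *ᵥ d) with hQQ
    set K1 := ((β + 3 * σ * rs)/6) * (rs + 2 * (rs + rd)) + (σ/2) * (rs + rd)^2 with hK1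
    clear_value rs rd aa QQ K1
    apply aux_limit _ ((1/2) * QQ + (1/2) * rd^2 * K1)
    intro t ht0 ht1
    have hk := keyA f0 g H hH β σ sstar (sstar + t • d)
    have hm := hmin (sstar + t • d)
    rw [← hrsdef] at hk
    set e := enorm' (sstar + t • d) with he
    clear_value e
    have he0 : 0 ≤ e := by rw [he]; exact enorm_nonneg' _
    have hts : enorm' (t • d) = t * rd := by
      rw [enorm_smul', abs_of_pos ht0, hrddef]
    have e1 : e ≤ rs + t * rd := by
      rw [he, ← hts, hrsdef]; exact enormp_add_le sstar (t • d)
    have e2 : rs - t * rd ≤ e := by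
      have h := enormp_add_le (sstar + t • d) (-(t • d))
      have hrw : sstar + t • d + -(t • d) = sstar := by abel
      have hneg : enorm' (-(t • d)) = t * rd := by
        rw [show -(t • d) = (-t) • d from by simp [neg_smul], enorm_smul', abs_neg,
          abs_of_pos ht0, hrddef]
      rw [hrw, hneg, ← hrsdef, ← he] at h
      linarith
    -- rewrite hk
    rw [add_sub_cancel_left] at hk
    rw [show (g + Bmat H β σ sstar *ᵥ sstar) ⬝ᵥ (t • d) = t * aa from by
        rw [dotProduct_smul, smul_eq_mul, ← haa]] at hk
    rw [show (t • d) ⬝ᵥ (Bmat H β σ sstar *ᵥ (t • d)) = t * (t * QQ) from by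
        rw [Matrix.mulVec_smul, dotProduct_smul, smul_dotProduct, smul_eq_mul,
          smul_eq_mul, ← hQQ]] at hk
    set KE := ((β + 3 * σ * rs)/6) * (rs + 2 * e) + (σ/2) * e ^ 2 with hKE
    clear_value KE
    -- bounds on the F₂ term
    have hK0 : 0 ≤ KE := by
      rw [hKE]
      exact add_nonneg (mul_nonneg (by linarith) (by linarith)) (by positivity)
    have hKle : KE ≤ K1 := by
      have he1' : e ≤ rs + rd := by nlinarith
      have hA : 0 ≤ (β + 3 * σ * rs)/6 := by linarith
      have h2e : rs + 2 * e ≤ rs + 2 * (rs + rd) := by linarith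
      have hsq' : e^2 ≤ (rs + rd)^2 := by nlinarith
      rw [hKE, hK1]
      exact add_le_add (mul_le_mul_of_nonneg_left h2e hA)
        (mul_le_mul_of_nonneg_left hsq' (by linarith : (0:ℝ) ≤ σ/2))
    have hsq : (e - rs)^2 ≤ (t * rd)^2 := by nlinarith
    have hF2le : (1/2) * (e - rs)^2 * KE ≤ (1/2) * (t * rd)^2 * K1 := by
      have := mul_le_mul hsq hKle hK0 (by positivity)
      linarith
    have hstep : 0 ≤ t * (aa + t * ((1/2) * QQ + (1/2) * rd^2 * K1)) := by nlinarith
    exact (mul_nonneg_iff_of_pos_left ht0).mp hstep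
  have hw : g + Bmat H β σ sstar *ᵥ sstar = 0 := by
    have h1 := hwd (g + Bmat H β σ sstar *ᵥ sstar)
    have h2 := hwd (-(g + Bmat H β σ sstar *ᵥ sstar))
    rw [dotProduct_neg] at h2
    exact dotProduct_self_eq_zero.mp (le_antisymm (by linarith) h1)
  -- simplified key identity
  have keyB : ∀ s : Fin n → ℝ, Mfun f0 g H β σ s - Mfun f0 g H β σ sstar =
      (1/2) * ((s - sstar) ⬝ᵥ (Bmat H β σ sstar *ᵥ (s - sstar)))
      + (1/2) * (enorm' s - enorm' sstar)^2 *
          (((β + 3 * σ * enorm' sstar)/6) * (enorm' sstar + 2 * enorm' s)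
            + (σ/2) * enorm' s ^ 2) := by
    intro s
    have hk := keyA f0 g H hH β σ sstar s
    rw [hw, zero_dotProduct] at hk
    linarith
  -- positive semidefiniteness of the quadratic form
  have hQ : ∀ d : Fin n → ℝ, 0 ≤ d ⬝ᵥ (Bmat H β σ sstar *ᵥ d) := by
    by_cases hs0 : sstar = 0
    · intro d
      have hrd : 0 ≤ enorm' d := enorm_nonneg' d
      have hrs : enorm' sstar = 0 := by
        rw [hs0]; unfold enorm'; simp
      have hβ' : 0 ≤ β := by rw [hrs] at hβ; linarith
      have half : 0 ≤ (1/2) * (d ⬝ᵥ (Bmat H β σ sstar *ᵥ d)) := by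
        apply aux_limit _ ((1/2) * (enorm' d)^2 * ((β/3) * enorm' d + (σ/2) * (enorm' d)^2))
        intro t ht0 ht1
        have hk := keyB (sstar + t • d)
        have hm := hmin (sstar + t • d)
        rw [add_sub_cancel_left] at hk
        rw [show (t • d) ⬝ᵥ (Bmat H β σ sstar *ᵥ (t • d))
              = t * (t * (d ⬝ᵥ (Bmat H β σ sstar *ᵥ d))) from by
            rw [Matrix.mulVec_smul, dotProduct_smul, smul_dotProduct]; rfl] at hk
        have hts : enorm' (sstar + t • d) = t * enorm' d := by
          rw [hs0, zero_add, enorm_smul', abs_of_pos ht0]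
        rw [hts, hrs] at hk
        have h5 : 0 ≤ σ * enorm' d ^ 4 * t^3 * (1 - t) :=
          mul_nonneg (by positivity) (by linarith)
        have hstep : 0 ≤ t^2 * ((1/2) * (d ⬝ᵥ (Bmat H β σ sstar *ᵥ d))
            + t * ((1/2) * (enorm' d)^2 * ((β/3) * enorm' d + (σ/2) * (enorm' d)^2))) := by
          nlinarith [hk, hm, h5]
        have ht2 : 0 < t^2 := by positivity
        exact (mul_nonneg_iff_of_pos_left ht2).mp hstep
      linarith
    · have hq : 0 < sstar ⬝ᵥ sstar := by
        rcases lt_or_eq_of_le (dot_self_nonneg sstar) with h | h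
        · exact h
        · exact absurd (dotProduct_self_eq_zero.mp h.symm) hs0
      have step2 : ∀ d : Fin n → ℝ, sstar ⬝ᵥ d ≠ 0 →
          0 ≤ d ⬝ᵥ (Bmat H β σ sstar *ᵥ d) := by
        intro d hud
        have hd0 : d ≠ 0 := by
          intro h; rw [h, dotProduct_zero] at hud; exact hud rfl
        have hdd : 0 < d ⬝ᵥ d := by
          rcases lt_or_eq_of_le (dot_self_nonneg d) with h | h
          · exact h
          · exact absurd (dotProduct_self_eq_zero.mp h.symm) hd0
        set t0 : ℝ := -2 * (sstar ⬝ᵥ d) / (d ⬝ᵥ d) with ht0def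
        have ht0ne : t0 ≠ 0 :=
          div_ne_zero (by simpa using hud) hdd.ne'
        have hes : enorm' (sstar + t0 • d) = enorm' sstar := by
          unfold enorm'
          congr 1
          have expand : (sstar + t0 • d) ⬝ᵥ (sstar + t0 • d)
              = sstar ⬝ᵥ sstar + 2 * t0 * (sstar ⬝ᵥ d) + t0^2 * (d ⬝ᵥ d) := by
            simp only [dotProduct_add, add_dotProduct, dotProduct_smul, smul_dotProduct,
              smul_eq_mul, dotProduct_comm d sstar]
            ring
          rw [expand, ht0def]
          field_simp
          ring
        have hk := keyB (sstar + t0 • d)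
        have hm := hmin (sstar + t0 • d)
        rw [add_sub_cancel_left, hes] at hk
        rw [show (t0 • d) ⬝ᵥ (Bmat H β σ sstar *ᵥ (t0 • d))
              = t0^2 * (d ⬝ᵥ (Bmat H β σ sstar *ᵥ d)) from by
            rw [Matrix.mulVec_smul, dotProduct_smul, smul_dotProduct, smul_eq_mul,
              smul_eq_mul]; ring] at hk
        have ht2 : 0 < t0^2 := by positivity
        nlinarith
      intro d
      by_cases hud : sstar ⬝ᵥ d = 0
      · have hQs : 0 ≤ sstar ⬝ᵥ (Bmat H β σ sstar *ᵥ sstar) := step2 sstar hq.ne'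
        apply aux_limit _ (sstar ⬝ᵥ (Bmat H β σ sstar *ᵥ sstar))
        intro t ht0 ht1
        set e := Real.sqrt t with hedef
        have he2 : e^2 = t := Real.sq_sqrt ht0.le
        have he0 : e ≠ 0 := (Real.sqrt_pos.mpr ht0).ne'
        have hds : d ⬝ᵥ sstar = 0 := by rw [dotProduct_comm]; exact hud
        have hp := step2 (d + e • sstar) (by
          simp only [dotProduct_add, dotProduct_smul, smul_eq_mul, hud, zero_add]
          exact mul_ne_zero he0 hq.ne')
        have hm2 := step2 (d - e • sstar) (by
          simp only [dotProduct_sub, dotProduct_smul, smul_eq_mul, hud, zero_sub]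
          exact neg_ne_zero.mpr (mul_ne_zero he0 hq.ne'))
        simp only [Matrix.mulVec_add, Matrix.mulVec_sub, Matrix.mulVec_smul,
          dotProduct_add, add_dotProduct, dotProduct_sub, sub_dotProduct,
          dotProduct_smul, smul_dotProduct, smul_eq_mul] at hp hm2
        nlinarith [hp, hm2, he2]
      · exact step2 d (by exact hud)
  refine ⟨posSemidef_iff_dotProduct_mulVec.mpr ⟨?_, ?_⟩, ?_⟩
  · rw [Matrix.IsHermitian, conjTranspose_eq_transpose_of_trivial]
    show (Bmat H β σ sstar)ᵀ = Bmat H β σ sstar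
    unfold Bmat
    rw [transpose_add, transpose_add, transpose_smul, transpose_smul, transpose_one, hH.eq]
  · intro x
    have : star x = x := by simp
    rw [this]
    exact hQ x
  · intro s
    exact ⟨keyB s, hF s⟩
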